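/- Let ν be a sub-probability measure on X (i.e., ν(X) ≤ 1), let F be a set of measurable functions X → [0,1] with f⋆ ∈ F, and let G ⊆ F with f⋆ ∈ G. Suppose ε > 0 satisfies ∫(f − f⋆)² dν ≤ ε² for every f ∈ G, and define the width w(x) := sup_{f,f′∈G} |f(x) − f′(x)|. Then for every γ > 0, ∫ 1(w(x) > γ)·w(x) dν(x) ≤ (8ε²/γ)·θ_{f⋆}(F, γ/2, ε/√2). -/

import Mathlib

open MeasureTheory ENNReal Set

/-- The value function disagreement coefficient
`θ_{f⋆}(F, γ₀, ε₀) = max 1 (sup_μ sup_{γ > γ₀, ε > ε₀} (γ²/ε²) ·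
μ {x | ∃ f ∈ F, |f x - f⋆ x| > γ ∧ ∫ (f - f⋆)² dμ ≤ ε²})`, the outer supremum ranging
over all probability measures `μ` on `X`. -/
noncomputable def valDisCoef {X : Type*} [MeasurableSpace X]
    (F : Set (X → ℝ)) (fstar : X → ℝ) (γ₀ ε₀ : ℝ) : ℝ≥0∞ :=
  max 1 (⨆ μ : Measure X, ⨆ _ : IsProbabilityMeasure μ,
    ⨆ γ : ℝ, ⨆ _ : γ₀ < γ, ⨆ ε : ℝ, ⨆ _ : ε₀ < ε,
      ENNReal.ofReal (γ ^ 2 / ε ^ 2) *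
        μ {x | ∃ f ∈ F, γ < |f x - fstar x| ∧ ∫ y, (f y - fstar y) ^ 2 ∂μ ≤ ε ^ 2})

/-- The width of the set `G` of functions at a point `x`:
`w(x) = sup_{f, f' ∈ G} |f x - f' x|`. -/
noncomputable def width {X : Type*} (G : Set (X → ℝ)) (x : X) : ℝ :=
  sSup {r : ℝ | ∃ f ∈ G, ∃ f' ∈ G, r = |f x - f' x|}

/-- Core disagreement-coefficient bound for sub-probability measures. -/
lemma disCoef_bound {X : Type*} [MeasurableSpace X]
    (ν : Measure X) (hν : ν Set.univ ≤ 1)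
    (F G : Set (X → ℝ)) (fstar : X → ℝ) (hGF : G ⊆ F)
    (ε : ℝ) (hε : 0 < ε)
    (hint : ∀ f ∈ G, ∫ x, (f x - fstar x) ^ 2 ∂ν ≤ ε ^ 2)
    (γ : ℝ) (hγ : 0 < γ) (γ' : ℝ) (hγ' : γ / 2 < γ') :
    ν {x | ∃ f ∈ G, γ' < |f x - fstar x|}
      ≤ ENNReal.ofReal (ε ^ 2 / γ' ^ 2) * valDisCoef F fstar (γ / 2) (ε / Real.sqrt 2) := by
  have hγ'0 : 0 < γ' := lt_trans (by linarith) hγ'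
  rcases eq_or_ne ν 0 with rfl | hν0
  · simp
  set c := ν Set.univ with hc
  have hc0 : c ≠ 0 := by
    simpa [hc] using (Measure.measure_univ_ne_zero).2 hν0
  have hcT : c ≠ ⊤ := (lt_of_le_of_lt hν one_lt_top).ne
  set μ : Measure X := c⁻¹ • ν with hμ
  have hprob : IsProbabilityMeasure μ := ⟨by
    rw [hμ, Measure.smul_apply, smul_eq_mul]; exact ENNReal.inv_mul_cancel hc0 hcT⟩
  set cr := c.toReal with hcr
  have hcr0 : 0 < cr := ENNReal.toReal_pos hc0 hcT
  have hcr1 : cr ≤ 1 := by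
    rw [hcr]
    exact ENNReal.toReal_le_of_le_ofReal zero_le_one (by simpa using hν)
  set ε'' := ε / Real.sqrt cr with hε''def
  have hsqpos : 0 < Real.sqrt cr := Real.sqrt_pos.2 hcr0
  have hsq1 : Real.sqrt cr ≤ 1 := by
    rw [show (1:ℝ) = Real.sqrt 1 by simp]
    exact Real.sqrt_le_sqrt hcr1
  have hεε'' : ε ≤ ε'' := by
    rw [hε''def, le_div_iff₀ hsqpos]
    nlinarith
  have hε''pos : 0 < ε'' := lt_of_lt_of_le hε hεε''
  have hsqrt2 : (1:ℝ) < Real.sqrt 2 := by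
    rw [show (1:ℝ) = Real.sqrt 1 by simp]
    exact Real.sqrt_lt_sqrt (by norm_num) (by norm_num)
  have hε''gt : ε / Real.sqrt 2 < ε'' :=
    lt_of_lt_of_le (div_lt_self hε hsqrt2) hεε''
  have hε''sq : ε'' ^ 2 = ε ^ 2 / cr := by
    rw [hε''def, div_pow, Real.sq_sqrt hcr0.le]
  have hμint : ∀ f ∈ G, ∫ y, (f y - fstar y) ^ 2 ∂μ ≤ ε'' ^ 2 := by
    intro f hf
    rw [hμ, integral_smul_measure, ENNReal.toReal_inv, smul_eq_mul, hε''sq,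
      div_eq_inv_mul]
    exact mul_le_mul_of_nonneg_left (hint f hf) (inv_nonneg.2 hcr0.le)
  set θ := valDisCoef F fstar (γ / 2) (ε / Real.sqrt 2) with hθ
  set D := {x | ∃ f ∈ F, γ' < |f x - fstar x| ∧ ∫ y, (f y - fstar y) ^ 2 ∂μ ≤ ε'' ^ 2}
    with hD
  have hθbound : ENNReal.ofReal (γ' ^ 2 / ε'' ^ 2) * μ D ≤ θ := by
    rw [hθ, valDisCoef]
    refine le_max_of_le_right ?_
    refine le_iSup_of_le μ ?_
    refine le_iSup_of_le hprob ?_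
    refine le_iSup_of_le γ' ?_
    refine le_iSup_of_le hγ' ?_
    refine le_iSup_of_le ε'' ?_
    exact le_iSup_of_le hε''gt le_rfl
  have hSD : {x | ∃ f ∈ G, γ' < |f x - fstar x|} ⊆ D := by
    rintro x ⟨f, hfG, hlt⟩
    exact ⟨f, hGF hfG, hlt, hμint f hfG⟩
  have hμD : μ D ≤ ENNReal.ofReal (ε'' ^ 2 / γ' ^ 2) * θ := by
    have h1 := mul_le_mul_right hθbound (ENNReal.ofReal (ε'' ^ 2 / γ' ^ 2))
    rwa [← mul_assoc, ← ENNReal.ofReal_mul (by positivity),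
      show ε'' ^ 2 / γ' ^ 2 * (γ' ^ 2 / ε'' ^ 2) = 1 by
        field_simp, ENNReal.ofReal_one, one_mul] at h1
  calc ν {x | ∃ f ∈ G, γ' < |f x - fstar x|}
      = c * μ {x | ∃ f ∈ G, γ' < |f x - fstar x|} := by
        rw [hμ]
        simp only [Measure.smul_apply, smul_eq_mul, ← mul_assoc,
          ENNReal.mul_inv_cancel hc0 hcT, one_mul]
    _ ≤ c * (ENNReal.ofReal (ε'' ^ 2 / γ' ^ 2) * θ) :=
        mul_le_mul_right (le_trans (measure_mono hSD) hμD) c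
    _ = ENNReal.ofReal (ε ^ 2 / γ' ^ 2) * θ := by
        rw [← mul_assoc, show c = ENNReal.ofReal cr from (ENNReal.ofReal_toReal hcT).symm,
          ← ENNReal.ofReal_mul hcr0.le]
        congr 2
        rw [hε''sq]
        field_simp

/-- Measure-theoretic core of the per-epoch excess-error bound: if `ν` is a
sub-probability measure, `f⋆ ∈ G ⊆ F`, and `∫ (f - f⋆)² dν ≤ ε²` for every `f ∈ G`, then
for every `γ > 0`,
`∫ 1(w(x) > γ)·w(x) dν(x) ≤ (8ε²/γ)·θ_{f⋆}(F, γ/2, ε/√2)`, where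
`w(x) = sup_{f, f' ∈ G} |f x - f' x|`. -/
theorem stmt_11 {X : Type*} [MeasurableSpace X]
    (ν : Measure X) (hν : ν Set.univ ≤ 1)
    (F G : Set (X → ℝ)) (hFm : ∀ f ∈ F, Measurable f)
    (hFb : ∀ f ∈ F, ∀ x, f x ∈ Set.Icc (0 : ℝ) 1) (hFcnt : F.Countable)
    (fstar : X → ℝ) (hstarF : fstar ∈ F) (hGF : G ⊆ F) (hstarG : fstar ∈ G)
    (ε : ℝ) (hε : 0 < ε)
    (hint : ∀ f ∈ G, ∫ x, (f x - fstar x) ^ 2 ∂ν ≤ ε ^ 2)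
    (γ : ℝ) (hγ : 0 < γ) :
    (∫⁻ x, ENNReal.ofReal (if γ < width G x then width G x else 0) ∂ν)
      ≤ ENNReal.ofReal (8 * ε ^ 2 / γ) *
          valDisCoef F fstar (γ / 2) (ε / Real.sqrt 2) := by
  classical
  set θ := valDisCoef F fstar (γ / 2) (ε / Real.sqrt 2) with hθdef
  have hGc : G.Countable := hFcnt.mono hGF
  have hGm : ∀ f ∈ G, Measurable f := fun f hf => hFm f (hGF hf)
  -- basic properties of the width
  have hSne : ∀ x : X, {r : ℝ | ∃ f ∈ G, ∃ f' ∈ G, r = |f x - f' x|}.Nonempty :=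
    fun x => ⟨0, fstar, hstarG, fstar, hstarG, by simp⟩
  have hSbdd : ∀ x : X, ∀ r ∈ {r : ℝ | ∃ f ∈ G, ∃ f' ∈ G, r = |f x - f' x|}, r ≤ 1 := by
    rintro x r ⟨f, hf, f', hf', rfl⟩
    have h1 := hFb f (hGF hf) x
    have h2 := hFb f' (hGF hf') x
    rw [abs_sub_le_iff]
    constructor <;> linarith [h1.1, h1.2, h2.1, h2.2]
  have hw1 : ∀ x, width G x ≤ 1 := fun x => csSup_le (hSne x) (hSbdd x)
  have hw0 : ∀ x, 0 ≤ width G x := fun x =>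
    le_csSup ⟨1, hSbdd x⟩ ⟨fstar, hstarG, fstar, hstarG, by simp⟩
  -- trivial case : γ ≥ 1
  rcases lt_or_ge γ 1 with hγ1 | hγ1
  swap
  · have hzero : ∀ x : X, (if γ < width G x then width G x else 0) = 0 := by
      intro x
      rw [if_neg (not_lt.2 ((hw1 x).trans hγ1))]
    simp only [hzero, ENNReal.ofReal_zero, lintegral_zero]
    exact zero_le
  -- half-width lemma
  have hhalf : ∀ (x : X) (t : ℝ), t < width G x → ∃ f ∈ G, t / 2 < |f x - fstar x| := by
    intro x t ht
    obtain ⟨r, ⟨f, hf, f', hf', rfl⟩, hr⟩ := exists_lt_of_lt_csSup (hSne x) ht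
    by_contra h
    push_neg at h
    have h1 := h f hf
    have h2 := h f' hf'
    have h3 : |f x - f' x| ≤ |f x - fstar x| + |fstar x - f' x| := abs_sub_le _ _ _
    rw [abs_sub_comm (fstar x)] at h3
    linarith
  -- key disagreement-coefficient bound
  have keyA : ∀ γ' : ℝ, γ / 2 < γ' →
      ν {x | ∃ f ∈ G, γ' < |f x - fstar x|} ≤ ENNReal.ofReal (ε ^ 2 / γ' ^ 2) * θ :=
    fun γ' h => disCoef_bound ν hν F G fstar hGF ε hε hint γ hγ γ' h
  -- bound on ν {γ < width}
  have hwγ : ν {x | γ < width G x} ≤ ENNReal.ofReal (4 * ε ^ 2 / γ ^ 2) * θ := by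
    set T : ℕ → Set X := fun n => {x | ∃ f ∈ G, γ / 2 + 1 / (n + 1) < |f x - fstar x|}
      with hT
    have hmono : Monotone T := by
      rintro m n hmn x ⟨f, hf, hlt⟩
      refine ⟨f, hf, lt_of_le_of_lt (add_le_add_right ?_ _) hlt⟩
      apply one_div_le_one_div_of_le (by positivity)
      exact add_le_add_left (by exact_mod_cast hmn) 1
    have hsub : {x | γ < width G x} ⊆ ⋃ n, T n := by
      intro x hx
      obtain ⟨g, hg, hglt⟩ := hhalf x γ hx
      obtain ⟨n, hn⟩ := exists_nat_one_div_lt (sub_pos.2 hglt)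
      exact Set.mem_iUnion.2 ⟨n, g, hg, by linarith⟩
    calc ν {x | γ < width G x} ≤ ν (⋃ n, T n) := measure_mono hsub
      _ = ⨆ n, ν (T n) := hmono.directed_le.measure_iUnion
      _ ≤ ENNReal.ofReal (4 * ε ^ 2 / γ ^ 2) * θ := by
          refine iSup_le fun n => le_trans
            (keyA _ (lt_add_of_pos_right _ (by positivity))) ?_
          refine mul_le_mul_left (ENNReal.ofReal_le_ofReal ?_) θ
          have h1 : γ / 2 ≤ γ / 2 + 1 / ((n : ℝ) + 1) :=
            le_add_of_nonneg_right (by positivity)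
          have h2 : (γ / 2) ^ 2 ≤ (γ / 2 + 1 / ((n : ℝ) + 1)) ^ 2 :=
            pow_le_pow_left₀ (by positivity) h1 2
          rw [div_le_div_iff₀ (by positivity) (by positivity)]
          nlinarith [sq_nonneg ε]
  -- measurability of the width
  have : Countable ↥G := hGc.to_subtype
  have hwiSup : width G = fun x => ⨆ p : G × G, |(p.1 : X → ℝ) x - (p.2 : X → ℝ) x| := by
    funext x
    rw [width, iSup]
    congr 1
    ext r
    constructor
    · rintro ⟨f, hf, f', hf', rfl⟩
      exact ⟨(⟨f, hf⟩, ⟨f', hf'⟩), rfl⟩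
    · rintro ⟨⟨f, f'⟩, rfl⟩
      exact ⟨f, f.2, f', f'.2, rfl⟩
  have hwm : Measurable (width G) := by
    rw [hwiSup]
    exact Measurable.iSup fun p => ((hGm _ p.1.2).sub (hGm _ p.2.2)).abs
  set g : X → ℝ := fun x => if γ < width G x then width G x else 0 with hgdef
  have hgm : Measurable g :=
    Measurable.ite (measurableSet_lt measurable_const hwm) hwm measurable_const
  have g_nn : 0 ≤ᵐ[ν] g := Filter.Eventually.of_forall fun x => by
    rw [hgdef]
    dsimp only
    split_ifs
    · exact hw0 x
    · exact le_rfl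
  rw [show (∫⁻ x, ENNReal.ofReal (if γ < width G x then width G x else 0) ∂ν)
      = ∫⁻ x, ENNReal.ofReal (g x) ∂ν from rfl,
    lintegral_eq_lintegral_meas_lt ν g_nn hgm.aemeasurable]
  -- pointwise set inclusion
  have hgset : ∀ t : ℝ, 0 < t →
      {a | t < g a} ⊆ {a | γ < width G a} ∩ {a | t < width G a} := by
    intro t ht a ha
    simp only [hgdef, Set.mem_setOf_eq] at ha
    by_cases h : γ < width G a
    · rw [if_pos h] at ha
      exact ⟨h, ha⟩
    · rw [if_neg h] at ha
      linarith
  -- split the domain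
  have hdom1 : Ioi (0:ℝ) = Ioc 0 γ ∪ Ioi γ := (Ioc_union_Ioi_eq_Ioi hγ.le).symm
  have hdom2 : Ioi γ = Ioc γ 1 ∪ Ioi 1 := (Ioc_union_Ioi_eq_Ioi hγ1.le).symm
  rw [hdom1, lintegral_union (measurableSet_Ioi) Ioc_disjoint_Ioi_same,
    hdom2, lintegral_union (measurableSet_Ioi) Ioc_disjoint_Ioi_same]
  -- piece 1
  have P1 : ∫⁻ t in Ioc (0:ℝ) γ, ν {a | t < g a}
      ≤ ENNReal.ofReal (4 * ε ^ 2 / γ) * θ := by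
    calc ∫⁻ t in Ioc (0:ℝ) γ, ν {a | t < g a}
        ≤ ∫⁻ _ in Ioc (0:ℝ) γ, ENNReal.ofReal (4 * ε ^ 2 / γ ^ 2) * θ :=
          setLIntegral_mono' measurableSet_Ioc fun t ht =>
            le_trans (measure_mono ((hgset t ht.1).trans inter_subset_left)) hwγ
      _ = ENNReal.ofReal (4 * ε ^ 2 / γ ^ 2) * θ * volume (Ioc (0:ℝ) γ) :=
          setLIntegral_const _ _
      _ = ENNReal.ofReal (4 * ε ^ 2 / γ) * θ := by
          rw [Real.volume_Ioc, mul_comm (ENNReal.ofReal (4 * ε ^ 2 / γ ^ 2) * θ),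
            ← mul_assoc, ← ENNReal.ofReal_mul (by simpa using hγ.le)]
          congr 2
          field_simp
          ring
  -- piece 2
  have P2 : ∫⁻ t in Ioc γ (1:ℝ), ν {a | t < g a}
      ≤ ENNReal.ofReal (4 * ε ^ 2 * (1 / γ - 1)) * θ := by
    have step1 : ∀ t ∈ Ioc γ (1:ℝ),
        ν {a | t < g a} ≤ ENNReal.ofReal (4 * ε ^ 2 / t ^ 2) * θ := by
      intro t ht
      have h1 : {a | t < g a} ⊆ {x | ∃ f ∈ G, t / 2 < |f x - fstar x|} := fun a ha =>
        hhalf a t ((hgset t (hγ.trans ht.1) ha).2)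
      calc ν {a | t < g a} ≤ ν {x | ∃ f ∈ G, t / 2 < |f x - fstar x|} := measure_mono h1
        _ ≤ ENNReal.ofReal (ε ^ 2 / (t / 2) ^ 2) * θ := keyA (t / 2) (by linarith [ht.1])
        _ = ENNReal.ofReal (4 * ε ^ 2 / t ^ 2) * θ := by
            congr 2
            have ht0 : (0:ℝ) < t := hγ.trans ht.1
            field_simp
            ring
    have hcont : ContinuousOn (fun t : ℝ => 4 * ε ^ 2 / t ^ 2) (Icc γ 1) := by
      apply continuousOn_const.div (continuousOn_pow 2)
      intro t ht
      exact pow_ne_zero 2 (ne_of_gt (lt_of_lt_of_le hγ ht.1))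
    have hicc : IntegrableOn (fun t : ℝ => 4 * ε ^ 2 / t ^ 2) (Icc γ 1) :=
      hcont.integrableOn_Icc
    have hintgr : IntegrableOn (fun t : ℝ => 4 * ε ^ 2 / t ^ 2) (Ioc γ 1) :=
      hicc.mono_set Ioc_subset_Icc_self
    have hval : ∫ t in Ioc γ (1:ℝ), 4 * ε ^ 2 / t ^ 2 = 4 * ε ^ 2 * (1 / γ - 1) := by
      rw [← intervalIntegral.integral_of_le hγ1.le]
      have : ∀ t : ℝ, 4 * ε ^ 2 / t ^ 2 = 4 * ε ^ 2 * t ^ (-2 : ℤ) := by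
        intro t
        rw [zpow_neg, div_eq_mul_inv]
        norm_num
      simp_rw [this]
      rw [intervalIntegral.integral_const_mul, integral_zpow]
      · have hγ0 : γ ≠ 0 := hγ.ne'
        norm_num
        left
        ring
      · right
        constructor
        · norm_num
        · rw [Set.uIcc_of_le hγ1.le]
          rintro ⟨h0, -⟩
          exact absurd h0 (not_le.2 hγ)
    calc ∫⁻ t in Ioc γ (1:ℝ), ν {a | t < g a}
        ≤ ∫⁻ t in Ioc γ (1:ℝ), ENNReal.ofReal (4 * ε ^ 2 / t ^ 2) * θ :=
          setLIntegral_mono' measurableSet_Ioc step1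
      _ = (∫⁻ t in Ioc γ (1:ℝ), ENNReal.ofReal (4 * ε ^ 2 / t ^ 2)) * θ :=
          lintegral_mul_const θ
            (measurable_const.div ((measurable_id.pow_const 2))).ennreal_ofReal
      _ = ENNReal.ofReal (4 * ε ^ 2 * (1 / γ - 1)) * θ := by
          rw [← ofReal_integral_eq_lintegral_ofReal hintgr
            (Filter.Eventually.of_forall fun t => by positivity), hval]
  -- piece 3
  have P3 : ∫⁻ t in Ioi (1:ℝ), ν {a | t < g a} = 0 := by
    rw [setLIntegral_congr_fun measurableSet_Ioi
      (fun t (ht : t ∈ Ioi (1:ℝ)) => ?_), lintegral_zero]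
    have hempty : {a | t < g a} = (∅ : Set X) := by
      ext a
      simp only [Set.mem_setOf_eq, Set.mem_empty_iff_false, iff_false, not_lt, hgdef]
      split_ifs
      · exact (hw1 a).trans ht.le
      · exact zero_le_one.trans ht.le
    rw [hempty, measure_empty]
  rw [P3, add_zero]
  refine le_trans (add_le_add P1 P2) ?_
  rw [← add_mul]
  refine mul_le_mul_left ?_ θ
  have h1γ : (1:ℝ) ≤ 1 / γ := by
    rw [le_div_iff₀ hγ]
    linarith
  rw [← ENNReal.ofReal_add (by positivity) (by nlinarith [h1γ, sq_nonneg ε])]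
  apply ENNReal.ofReal_le_ofReal
  have e1 : 4 * ε ^ 2 / γ + 4 * ε ^ 2 * (1 / γ - 1) = 8 * ε ^ 2 / γ - 4 * ε ^ 2 := by
    field_simp
    ring
  rw [e1]
  linarith [sq_nonneg ε]
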